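/- Let A ∈ ℂ^{m×n×p} admit a Moore–Penrose inverse A†. Let α ∈ ℂ and define Z₀ = α·A^* and Z_{j+1} = Z_j *_M Σ_{k=0}^{18} (I_M − A *_M Z_j)^k (the hyperpower iteration of order 19). If ‖mat(A *_M A† − A *_M Z₀)‖_F < 1, then the sequence Z_j converges entrywise to A†, with ‖mat(A† − Z_j)‖_F ≤ ‖mat(A†)‖_F · ‖mat(A *_M A† − A *_M Z₀)‖_F^{19^j} for all j ≥ 0. -/

import Mathlib

open Matrix Finset

/-- A third-order tensor in `ℂ^{m×n×p}`, given by its `p` frontal slices. -/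
abbrev Tensor (m n p : ℕ) := Fin p → Matrix (Fin m) (Fin n) ℂ

/-- The transform `Â = A ×₃ M` (mode-3 product with `M`). -/
noncomputable def hatT {m n p : ℕ} (M : Matrix (Fin p) (Fin p) ℂ) (A : Tensor m n p) :
    Tensor m n p :=
  fun l => ∑ s, M l s • A s

/-- `mat(A)`: the block-diagonal matrix whose blocks are frontal slices of `A ×₃ M`. -/
noncomputable def matT {m n p : ℕ} (M : Matrix (Fin p) (Fin p) ℂ) (A : Tensor m n p) :
    Matrix (Fin m × Fin p) (Fin n × Fin p) ℂ :=
  Matrix.blockDiagonal (hatT M A)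

/-- The M-product `A *_M B`, determined by `mat(A *_M B) = mat(A)·mat(B)`. -/
noncomputable def mprod {m n k p : ℕ} (M : Matrix (Fin p) (Fin p) ℂ)
    (A : Tensor m n p) (B : Tensor n k p) : Tensor m k p :=
  fun l => ∑ s, M⁻¹ l s • (hatT M A s * hatT M B s)

/-- The conjugate transpose `A^*`, determined by `mat(A^*) = mat(A)^*`. -/
noncomputable def mstar {m n p : ℕ} (M : Matrix (Fin p) (Fin p) ℂ) (A : Tensor m n p) :
    Tensor n m p :=
  fun l => ∑ s, M⁻¹ l s • (hatT M A s)ᴴ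

/-- The identity tensor `I_M ∈ ℂ^{m×m×p}`, determined by `mat(I_M) = I`. -/
noncomputable def idT {p : ℕ} (M : Matrix (Fin p) (Fin p) ℂ) (m : ℕ) : Tensor m m p :=
  fun l => ∑ s, M⁻¹ l s • (1 : Matrix (Fin m) (Fin m) ℂ)

/-- M-product powers of a square tensor. -/
noncomputable def mpow {m p : ℕ} (M : Matrix (Fin p) (Fin p) ℂ) (A : Tensor m m p) :
    ℕ → Tensor m m p
  | 0 => idT M m
  | k + 1 => mprod M A (mpow M A k)

/-- `R_M(A)`: the column space of `mat(A)`. -/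
noncomputable def rangeM {m n p : ℕ} (M : Matrix (Fin p) (Fin p) ℂ) (A : Tensor m n p) :
    Submodule ℂ (Fin m × Fin p → ℂ) :=
  LinearMap.range (matT M A).mulVecLin

/-- `N_M(A)`: the kernel of `mat(A)`. -/
noncomputable def kerM {m n p : ℕ} (M : Matrix (Fin p) (Fin p) ℂ) (A : Tensor m n p) :
    Submodule ℂ (Fin n × Fin p → ℂ) :=
  LinearMap.ker (matT M A).mulVecLin

/-- `rank_M(A) = rank(mat(A))`. -/
noncomputable def rankM {m n p : ℕ} (M : Matrix (Fin p) (Fin p) ℂ) (A : Tensor m n p) : ℕ :=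
  (matT M A).rank

/-- The first `s` lateral slices `Q(:,1:s,:)`. -/
def latSlice {n s p : ℕ} (hsn : s ≤ n) (Q : Tensor n n p) : Tensor n s p :=
  fun l => (Q l).submatrix id (Fin.castLE hsn)

/-- The first `s` horizontal slices `R(1:s,:,:)`. -/
def horSlice {n m s p : ℕ} (hsn : s ≤ n) (R : Tensor n m p) : Tensor s m p :=
  fun l => (R l).submatrix (Fin.castLE hsn) id

/-- Frobenius norm of a complex matrix. -/
noncomputable def frobNorm {α β : Type*} [Fintype α] [Fintype β] (X : Matrix α β ℂ) : ℝ :=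
  Real.sqrt (∑ i, ∑ j, ‖X i j‖ ^ 2)

namespace HPIAux

attribute [local instance] Matrix.frobeniusSeminormedAddCommGroup Matrix.frobeniusNormedRing

variable {m n k p : ℕ} {M : Matrix (Fin p) (Fin p) ℂ}

lemma frobNorm_eq_norm {a b : Type*} [Fintype a] [Fintype b] (X : Matrix a b ℂ) :
    frobNorm X = ‖X‖ := by
  rw [Matrix.frobenius_norm_def, frobNorm, Real.sqrt_eq_rpow]
  norm_num

lemma entry_le_norm {a b : Type*} [Fintype a] [Fintype b] (X : Matrix a b ℂ) (i : a) (j : b) :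
    ‖X i j‖ ≤ ‖X‖ := by
  rw [← frobNorm_eq_norm, frobNorm]
  have h1 : ‖X i j‖ = Real.sqrt (‖X i j‖ ^ 2) := (Real.sqrt_sq (norm_nonneg _)).symm
  rw [h1]
  apply Real.sqrt_le_sqrt
  calc ‖X i j‖ ^ 2 ≤ ∑ j', ‖X i j'‖ ^ 2 :=
        Finset.single_le_sum (f := fun j' => ‖X i j'‖ ^ 2) (fun j' _ => by positivity)
          (Finset.mem_univ j)
    _ ≤ ∑ i', ∑ j', ‖X i' j'‖ ^ 2 :=
        Finset.single_le_sum (f := fun i' => ∑ j', ‖X i' j'‖ ^ 2) (fun i' _ => by positivity)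
          (Finset.mem_univ i)

lemma hatT_invSum (hM : IsUnit M.det) (C : Fin p → Matrix (Fin m) (Fin n) ℂ) :
    hatT M (fun l => ∑ s, M⁻¹ l s • C s) = C := by
  funext l
  simp only [hatT, Finset.smul_sum, smul_smul]
  rw [Finset.sum_comm]
  have h : ∀ s, ∑ t, (M l t * M⁻¹ t s) • C s = (M * M⁻¹) l s • C s := by
    intro s; rw [← Finset.sum_smul, Matrix.mul_apply]
  simp_rw [h, Matrix.mul_nonsing_inv _ hM]
  simp [Matrix.one_apply, ite_smul]

lemma invSum_hatT (hM : IsUnit M.det) (A : Tensor m n p) :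
    (fun l => ∑ s, M⁻¹ l s • hatT M A s) = A := by
  funext l
  simp only [hatT, Finset.smul_sum, smul_smul]
  rw [Finset.sum_comm]
  have h : ∀ s, ∑ t, (M⁻¹ l t * M t s) • A s = (M⁻¹ * M) l s • A s := by
    intro s; rw [← Finset.sum_smul, Matrix.mul_apply]
  simp_rw [h, Matrix.nonsing_inv_mul _ hM]
  simp [Matrix.one_apply, ite_smul]

lemma hatT_mprod (hM : IsUnit M.det) (A : Tensor m n p) (B : Tensor n k p) :
    hatT M (mprod M A B) = fun l => hatT M A l * hatT M B l :=
  hatT_invSum hM _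

lemma hatT_mstar (hM : IsUnit M.det) (A : Tensor m n p) :
    hatT M (mstar M A) = fun l => (hatT M A l)ᴴ :=
  hatT_invSum hM _

lemma hatT_idT (hM : IsUnit M.det) :
    hatT M (idT M m) = fun _ => (1 : Matrix (Fin m) (Fin m) ℂ) :=
  hatT_invSum hM _

lemma matT_mprod (hM : IsUnit M.det) (A : Tensor m n p) (B : Tensor n k p) :
    matT M (mprod M A B) = matT M A * matT M B := by
  rw [matT, hatT_mprod hM, matT, matT, Matrix.blockDiagonal_mul]

lemma matT_mstar (hM : IsUnit M.det) (A : Tensor m n p) :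
    matT M (mstar M A) = (matT M A)ᴴ := by
  rw [matT, hatT_mstar hM, matT, Matrix.blockDiagonal_conjTranspose]

lemma matT_idT (hM : IsUnit M.det) :
    matT M (idT M m) = (1 : Matrix (Fin m × Fin p) (Fin m × Fin p) ℂ) := by
  rw [matT, hatT_idT hM]
  exact Matrix.blockDiagonal_one

lemma hatT_add (A B : Tensor m n p) : hatT M (A + B) = hatT M A + hatT M B := by
  funext l
  simp [hatT, smul_add, Finset.sum_add_distrib]

lemma hatT_smul (c : ℂ) (A : Tensor m n p) : hatT M (c • A) = c • hatT M A := by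
  funext l
  simp [hatT, Finset.smul_sum, smul_comm c]

noncomputable def matL (M : Matrix (Fin p) (Fin p) ℂ) :
    Tensor m n p →ₗ[ℂ] Matrix (Fin m × Fin p) (Fin n × Fin p) ℂ where
  toFun := matT M
  map_add' A B := by
    show matT M (A + B) = matT M A + matT M B
    rw [matT, matT, matT, hatT_add, Matrix.blockDiagonal_add]
  map_smul' c A := by
    show matT M (c • A) = c • matT M A
    rw [matT, matT, hatT_smul, Matrix.blockDiagonal_smul]

lemma matT_sub (A B : Tensor m n p) : matT M (A - B) = matT M A - matT M B :=
  map_sub (matL M) A B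

lemma matT_smul (c : ℂ) (A : Tensor m n p) : matT M (c • A) = c • matT M A :=
  map_smul (matL M) c A

lemma matT_sum {ι : Type*} (s : Finset ι) (f : ι → Tensor m n p) :
    matT M (∑ i ∈ s, f i) = ∑ i ∈ s, matT M (f i) :=
  map_sum (matL M) f s

lemma matT_mpow (hM : IsUnit M.det) (A : Tensor m m p) (j : ℕ) :
    matT M (mpow M A j) = matT M A ^ j := by
  induction j with
  | zero => simpa [mpow] using matT_idT hM
  | succ k ih => rw [mpow, matT_mprod hM, ih, pow_succ']

lemma stepTS {ι : Type*} [Fintype ι] [DecidableEq ι] (P T : Matrix ι ι ℂ)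
    (hP2 : P * P = P) (hPT : P * T = T) (hTP : T * P = T) :
    T * (∑ k ∈ Finset.range 19, (1 - T) ^ k) = P - (P - T) ^ 19 := by
  have e3 : (P - T) * (1 - P) = 0 := by
    rw [sub_mul, mul_sub, mul_sub, mul_one, mul_one, hP2, hTP]; abel
  have split : ∀ N, (1 - T) ^ (N + 1) = (1 - P) + (P - T) ^ (N + 1) := by
    intro N
    induction N with
    | zero => simp only [zero_add, pow_one]; abel
    | succ N ihN =>
      have hA : (1 - P) * (1 - T) = 1 - P := by
        rw [mul_sub, mul_one, sub_mul, one_mul, hPT]; abel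
      have hB : (P - T) ^ (N + 1) * (1 - T) = (P - T) ^ (N + 2) := by
        have h1T : (1 : Matrix ι ι ℂ) - T = (1 - P) + (P - T) := by abel
        rw [h1T, mul_add, pow_succ (P - T) N, mul_assoc, e3, mul_zero, zero_add]
        exact (pow_succ (P - T) (N + 1)).symm
      calc (1 - T) ^ (N + 1 + 1) = (1 - T) ^ (N + 1) * (1 - T) := pow_succ _ _
        _ = ((1 - P) + (P - T) ^ (N + 1)) * (1 - T) := by rw [ihN]
        _ = (1 - P) * (1 - T) + (P - T) ^ (N + 1) * (1 - T) := add_mul _ _ _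
        _ = (1 - P) + (P - T) ^ (N + 2) := by rw [hA, hB]
  have h := mul_geom_sum (1 - T) 19
  rw [sub_sub_cancel_left, neg_mul, neg_eq_iff_eq_neg] at h
  rw [h, neg_sub, show (19 : ℕ) = 18 + 1 from rfl, split 18]
  abel

lemma powP {ι : Type*} [Fintype ι] [DecidableEq ι] (P T : Matrix ι ι ℂ)
    (hP2 : P * P = P) (hTP : T * P = T) :
    (P - T) ^ 19 * P = (P - T) ^ 19 := by
  have e4 : (P - T) * P = P - T := by rw [sub_mul, hP2, hTP]
  rw [show (19 : ℕ) = 18 + 1 from rfl, pow_succ, mul_assoc, e4]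

lemma key_eq {ι κ : Type*} [Fintype ι] [Fintype κ] [DecidableEq ι] [DecidableEq κ]
    (a : Matrix ι κ ℂ) (x : Matrix κ ι ℂ) (z : ℕ → Matrix κ ι ℂ)
    (h1 : a * x * a = a) (h2 : x * a * x = x) (h3 : (a * x)ᴴ = a * x) (h4 : (x * a)ᴴ = x * a)
    (α : ℂ) (hz0 : z 0 = α • aᴴ)
    (hz : ∀ j, z (j + 1) = z j * ∑ k ∈ Finset.range 19, (1 - a * z j) ^ k) :
    ∀ j, x - z j = x * (a * x - a * z 0) ^ 19 ^ j := by
  have hP2 : (a * x) * (a * x) = a * x := by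
    rw [← Matrix.mul_assoc, h1]
  have haa : aᴴ * (a * x) = aᴴ := by
    calc aᴴ * (a * x) = aᴴ * (a * x)ᴴ := by rw [h3]
      _ = ((a * x) * a)ᴴ := (conjTranspose_mul (a * x) a).symm
      _ = aᴴ := by rw [h1]
  have hxa : (x * a) * aᴴ = aᴴ := by
    calc (x * a) * aᴴ = (x * a)ᴴ * aᴴ := by rw [h4]
      _ = (a * (x * a))ᴴ := (conjTranspose_mul a (x * a)).symm
      _ = aᴴ := by rw [← Matrix.mul_assoc, h1]
  have inv : ∀ j, (a * x) * (a * z j) = a * z j ∧ (a * z j) * (a * x) = a * z j ∧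
      (x * a) * z j = z j := by
    intro j
    induction j with
    | zero =>
      have az0 : a * z 0 = α • (a * aᴴ) := by rw [hz0, Matrix.mul_smul]
      refine ⟨?_, ?_, ?_⟩
      · rw [az0, Matrix.mul_smul, ← Matrix.mul_assoc, h1]
      · rw [az0, Matrix.smul_mul, Matrix.mul_assoc, haa]
      · rw [hz0, Matrix.mul_smul, hxa]
    | succ j ih =>
      obtain ⟨hPT, hTP, hxaz⟩ := ih
      have haz' : a * z (j + 1) = (a * z j) * ∑ k ∈ Finset.range 19, (1 - a * z j) ^ k := by
        rw [hz j, ← Matrix.mul_assoc]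
      have hS := stepTS (a * x) (a * z j) hP2 hPT hTP
      refine ⟨?_, ?_, ?_⟩
      · rw [haz', ← Matrix.mul_assoc, hPT]
      · rw [haz'.trans hS, sub_mul, hP2, powP (a * x) (a * z j) hP2 hTP]
      · rw [hz j, ← Matrix.mul_assoc, hxaz]
  have hRstep : ∀ j, a * x - a * z (j + 1) = (a * x - a * z j) ^ 19 := by
    intro j
    obtain ⟨hPT, hTP, _⟩ := inv j
    have haz' : a * z (j + 1) = (a * z j) * ∑ k ∈ Finset.range 19, (1 - a * z j) ^ k := by
      rw [hz j, ← Matrix.mul_assoc]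
    rw [haz'.trans (stepTS (a * x) (a * z j) hP2 hPT hTP), sub_sub_cancel]
  have hR : ∀ j, a * x - a * z j = (a * x - a * z 0) ^ 19 ^ j := by
    intro j
    induction j with
    | zero => rw [pow_zero, pow_one]
    | succ j ih => rw [hRstep j, ih, ← pow_mul, ← pow_succ]
  intro j
  have hxP : x * (a * x) = x := by rw [← Matrix.mul_assoc, h2]
  obtain ⟨_, _, hxaz⟩ := inv j
  calc x - z j = x * (a * x) - (x * a) * z j := by rw [hxP, hxaz]
    _ = x * (a * x - a * z j) := by rw [Matrix.mul_sub, Matrix.mul_assoc]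
    _ = x * (a * x - a * z 0) ^ 19 ^ j := by rw [hR j]

end HPIAux

section MainProof

open HPIAux

attribute [local instance] Matrix.frobeniusSeminormedAddCommGroup Matrix.frobeniusNormedRing

/-- Corollary 4.3 (Moore–Penrose case): the 19th-order hyperpower iteration started at
`Z₀ = α·A^*` converges to the Moore–Penrose inverse `A†` with the stated bound. -/
theorem hpi19_converges_to_moore_penrose {m n p : ℕ}
    (M : Matrix (Fin p) (Fin p) ℂ) (hM : IsUnit M.det)
    (A : Tensor m n p) (X : Tensor n m p)
    (h1 : mprod M A (mprod M X A) = A)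
    (h2 : mprod M X (mprod M A X) = X)
    (h3 : mstar M (mprod M A X) = mprod M A X)
    (h4 : mstar M (mprod M X A) = mprod M X A)
    (α : ℂ) (Z : ℕ → Tensor n m p)
    (hZ0 : Z 0 = α • mstar M A)
    (hZ : ∀ j, Z (j + 1) =
      mprod M (Z j) (∑ k ∈ Finset.range 19, mpow M (idT M m - mprod M A (Z j)) k))
    (hinit : frobNorm (matT M (mprod M A X - mprod M A (Z 0))) < 1) :
    (∀ j, frobNorm (matT M (X - Z j)) ≤
        frobNorm (matT M X) *
          frobNorm (matT M (mprod M A X - mprod M A (Z 0))) ^ (19 ^ j)) ∧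
      ∀ (l : Fin p) (i : Fin n) (j : Fin m),
        Filter.Tendsto (fun t => Z t l i j) Filter.atTop (nhds (X l i j)) := by
  classical
  set a := matT M A with ha
  set x := matT M X with hx
  have ha1 : a * x * a = a := by
    have := congrArg (matT M) h1
    rw [matT_mprod hM, matT_mprod hM, ← Matrix.mul_assoc] at this
    exact this
  have ha2 : x * a * x = x := by
    have := congrArg (matT M) h2
    rw [matT_mprod hM, matT_mprod hM, ← Matrix.mul_assoc] at this
    exact this
  have ha3 : (a * x)ᴴ = a * x := by
    have := congrArg (matT M) h3
    rw [matT_mstar hM, matT_mprod hM] at this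
    exact this
  have ha4 : (x * a)ᴴ = x * a := by
    have := congrArg (matT M) h4
    rw [matT_mstar hM, matT_mprod hM] at this
    exact this
  have hz0' : matT M (Z 0) = α • aᴴ := by
    rw [hZ0, matT_smul, matT_mstar hM]
  have hz' : ∀ j, matT M (Z (j + 1)) =
      matT M (Z j) * ∑ k ∈ Finset.range 19, (1 - a * matT M (Z j)) ^ k := by
    intro j
    rw [hZ j, matT_mprod hM, matT_sum]
    congr 1
    refine Finset.sum_congr rfl fun k _ => ?_
    rw [matT_mpow hM, matT_sub, matT_idT hM, matT_mprod hM]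
  have key := key_eq a x (fun j => matT M (Z j)) ha1 ha2 ha3 ha4 α hz0' hz'
  have hE : matT M (mprod M A X - mprod M A (Z 0)) = a * x - a * matT M (Z 0) := by
    rw [matT_sub, matT_mprod hM, matT_mprod hM]
  set r : ℝ := frobNorm (matT M (mprod M A X - mprod M A (Z 0))) with hrdef
  have hrnorm : r = ‖a * x - a * matT M (Z 0)‖ := by rw [hrdef, hE, frobNorm_eq_norm]
  have hr0 : 0 ≤ r := by rw [hrnorm]; exact norm_nonneg _
  have hr1 : r < 1 := hinit
  have hbd : ∀ t, ‖x - matT M (Z t)‖ ≤ ‖x‖ * r ^ 19 ^ t := by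
    intro t
    rw [key t]
    calc ‖x * (a * x - a * matT M (Z 0)) ^ 19 ^ t‖
        ≤ ‖x‖ * ‖(a * x - a * matT M (Z 0)) ^ 19 ^ t‖ := Matrix.frobenius_norm_mul _ _
      _ ≤ ‖x‖ * ‖a * x - a * matT M (Z 0)‖ ^ 19 ^ t := by
          refine mul_le_mul_of_nonneg_left ?_ (norm_nonneg _)
          exact norm_pow_le' _ (pow_pos (by norm_num) t)
      _ = ‖x‖ * r ^ 19 ^ t := by rw [hrnorm]
  constructor
  · intro t
    have := hbd t
    rw [← matT_sub, ← frobNorm_eq_norm, ← frobNorm_eq_norm] at this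
    exact this
  · intro l i j
    have hentry : ∀ t : ℕ, ‖Z t l i j - X l i j‖ ≤
        (∑ s, ‖M⁻¹ l s‖) * (‖x‖ * r ^ 19 ^ t) := by
      intro t
      have hsub : ‖Z t l i j - X l i j‖ = ‖(X - Z t) l i j‖ := by
        rw [← norm_neg]
        congr 1
        simp [Pi.sub_apply, Matrix.sub_apply]
      have hXZ : (X - Z t) l i j =
          ∑ s, M⁻¹ l s * matT M (X - Z t) (i, s) (j, s) := by
        conv_lhs => rw [← invSum_hatT hM (X - Z t)]
        simp [matT, Matrix.blockDiagonal_apply_eq, Matrix.sum_apply]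
      rw [hsub, hXZ]
      calc ‖∑ s, M⁻¹ l s * matT M (X - Z t) (i, s) (j, s)‖
          ≤ ∑ s, ‖M⁻¹ l s * matT M (X - Z t) (i, s) (j, s)‖ := norm_sum_le _ _
        _ = ∑ s, ‖M⁻¹ l s‖ * ‖matT M (X - Z t) (i, s) (j, s)‖ := by
            simp [norm_mul]
        _ ≤ ∑ s, ‖M⁻¹ l s‖ * (‖x‖ * r ^ 19 ^ t) := by
            refine Finset.sum_le_sum fun s _ => ?_
            refine mul_le_mul_of_nonneg_left ?_ (norm_nonneg _)
            calc ‖matT M (X - Z t) (i, s) (j, s)‖ ≤ ‖matT M (X - Z t)‖ :=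
                  entry_le_norm _ _ _
              _ = ‖x - matT M (Z t)‖ := by rw [matT_sub]
              _ ≤ ‖x‖ * r ^ 19 ^ t := hbd t
        _ = (∑ s, ‖M⁻¹ l s‖) * (‖x‖ * r ^ 19 ^ t) := by rw [← Finset.sum_mul]
    have h19 : Filter.Tendsto (fun t : ℕ => 19 ^ t) Filter.atTop Filter.atTop :=
      tendsto_pow_atTop_atTop_of_one_lt (by norm_num)
    have hpow : Filter.Tendsto (fun t : ℕ => r ^ 19 ^ t) Filter.atTop (nhds 0) :=
      (tendsto_pow_atTop_nhds_zero_of_lt_one hr0 hr1).comp h19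
    have habove : Filter.Tendsto
        (fun t : ℕ => (∑ s, ‖M⁻¹ l s‖) * (‖x‖ * r ^ 19 ^ t)) Filter.atTop (nhds 0) := by
      have := ((hpow.const_mul ‖x‖).const_mul (∑ s, ‖M⁻¹ l s‖))
      simpa using this
    have htend0 : Filter.Tendsto (fun t => Z t l i j - X l i j) Filter.atTop (nhds 0) :=
      squeeze_zero_norm hentry habove
    have := htend0.add_const (X l i j)
    simpa using this

end MainProof
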